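/- Fix integers k ≥ 1, n ≥ 1 and 1 ≤ m ≤ k. Let y_m = 1 / (1 + (1 − 2/(2k+1))^{2m−2}), μ_m = 1/2 − 1/(4k) + y_m/(2k), p₀ = ((1/2 − 1/(4k))y_m) / ((1/2 − 1/(4k))y_m + (1/2 + 1/(4k))(1 − y_m)), and p₁ = ((1/2 + 1/(4k))y_m) / ((1/2 + 1/(4k))y_m + (1/2 − 1/(4k))(1 − y_m)). Let ω be a Bernoulli(μ_m) random variable and, conditional on ω, let X₁, …, X_n be i.i.d. Bernoulli(p_ω). Then there exists a function h : {0, 1, …, n} → {0,1} such that P( h(Σ_{i=1}^n X_i) ≠ ω ) ≤ exp(−n/(72k²)). -/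

import Mathlib

noncomputable section

/-- `y_m = 1 / (1 + (1 - 2/(2k+1))^(2m-2))`. -/
def yk (k m : ℕ) : ℝ := 1 / (1 + (1 - 2/(2*(k:ℝ) + 1)) ^ (2*m - 2))

/-- `μ_m = 1/2 - 1/(4k) + y_m/(2k)`. -/
def muk (k m : ℕ) : ℝ := 1/2 - 1/(4*(k:ℝ)) + yk k m / (2*(k:ℝ))

/-- `p₀`: the conditional probability of the high forecast given `ω = 0` under `I(m)`. -/
def p0k (k m : ℕ) : ℝ :=
  ((1/2 - 1/(4*(k:ℝ))) * yk k m)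
    / ((1/2 - 1/(4*(k:ℝ))) * yk k m + (1/2 + 1/(4*(k:ℝ))) * (1 - yk k m))

/-- `p₁`: the conditional probability of the high forecast given `ω = 1` under `I(m)`. -/
def p1k (k m : ℕ) : ℝ :=
  ((1/2 + 1/(4*(k:ℝ))) * yk k m)
    / ((1/2 + 1/(4*(k:ℝ))) * yk k m + (1/2 - 1/(4*(k:ℝ))) * (1 - yk k m))

open Real Finset

open Real

private def bgf (p x : ℝ) : ℝ := 1 - p + p * Real.exp x
private def bFf (p x : ℝ) : ℝ := p * x + x ^ 2 / 8 - Real.log (bgf p x)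
private def bGf (p x : ℝ) : ℝ := p + x / 4 - p * Real.exp x / bgf p x

private lemma bgf_pos (p : ℝ) (hp0 : 0 ≤ p) (hp1 : p ≤ 1) (x : ℝ) : 0 < bgf p x := by
  unfold bgf
  rcases le_total (Real.exp x) 1 with h | h
  · nlinarith [Real.exp_pos x]
  · nlinarith

private lemma bgf_deriv (p x : ℝ) : HasDerivAt (bgf p) (p * Real.exp x) x := by
  unfold bgf
  simpa using ((Real.hasDerivAt_exp x).const_mul p).const_add (1 - p)

private lemma bFf_deriv (p : ℝ) (hp0 : 0 ≤ p) (hp1 : p ≤ 1) (x : ℝ) :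
    HasDerivAt (bFf p) (bGf p x) x := by
  have h1 : HasDerivAt (fun x : ℝ => p * x) p x := by
    simpa using (hasDerivAt_id x).const_mul p
  have h2 : HasDerivAt (fun x : ℝ => x ^ 2 / 8) (x / 4) x := by
    have := (hasDerivAt_pow 2 x).div_const 8
    refine this.congr_deriv ?_
    ring
  have h3 : HasDerivAt (fun x => Real.log (bgf p x)) (p * Real.exp x / bgf p x) x :=
    (bgf_deriv p x).log (bgf_pos p hp0 hp1 x).ne'
  unfold bFf bGf
  exact (h1.add h2).sub h3

private lemma bGf_deriv (p : ℝ) (hp0 : 0 ≤ p) (hp1 : p ≤ 1) (x : ℝ) :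
    HasDerivAt (bGf p) (1/4 - p * Real.exp x * (1 - p) / (bgf p x) ^ 2) x := by
  have h1 : HasDerivAt (fun x : ℝ => p + x / 4) (1/4) x := by
    simpa using ((hasDerivAt_id x).div_const 4).const_add p
  have h2 : HasDerivAt (fun x => p * Real.exp x / bgf p x)
      ((p * Real.exp x * bgf p x - p * Real.exp x * (p * Real.exp x)) / (bgf p x) ^ 2) x :=
    ((Real.hasDerivAt_exp x).const_mul p).div (bgf_deriv p x) (bgf_pos p hp0 hp1 x).ne'
  have heq : (p * Real.exp x * bgf p x - p * Real.exp x * (p * Real.exp x)) / (bgf p x) ^ 2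
      = p * Real.exp x * (1 - p) / (bgf p x) ^ 2 := by
    unfold bgf; ring_nf
  rw [heq] at h2
  unfold bGf
  exact h1.sub h2

private lemma bGf_mono (p : ℝ) (hp0 : 0 ≤ p) (hp1 : p ≤ 1) : Monotone (bGf p) := by
  apply monotone_of_hasDerivAt_nonneg (bGf_deriv p hp0 hp1)
  intro x
  have hgx := bgf_pos p hp0 hp1 x
  have hx : p * Real.exp x * (1 - p) / (bgf p x) ^ 2 ≤ 1/4 := by
    rw [div_le_iff₀ (by positivity)]
    unfold bgf
    nlinarith [sq_nonneg (1 - p - p * Real.exp x)]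
  simp only [Pi.zero_apply]
  linarith

private lemma bGf_zero (p : ℝ) : bGf p 0 = 0 := by
  unfold bGf bgf
  simp

private lemma bFf_zero (p : ℝ) : bFf p 0 = 0 := by
  unfold bFf bgf
  simp

private lemma bernoulli_mgf_le (p : ℝ) (hp0 : 0 ≤ p) (hp1 : p ≤ 1) (l : ℝ) :
    1 - p + p * Real.exp l ≤ Real.exp (p * l + l ^ 2 / 8) := by
  have hFd := bFf_deriv p hp0 hp1
  have hGmono := bGf_mono p hp0 hp1
  have hFnonneg : 0 ≤ bFf p l := by
    rcases le_total 0 l with hl | hl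
    · have hmono : MonotoneOn (bFf p) (Set.Ici 0) := by
        apply monotoneOn_of_deriv_nonneg (convex_Ici 0)
          (fun x _ => ((hFd x).differentiableAt).continuousAt.continuousWithinAt)
          (fun x _ => ((hFd x).differentiableAt).differentiableWithinAt)
        intro x hx
        rw [(hFd x).deriv]
        rw [interior_Ici] at hx
        have := hGmono (le_of_lt hx)
        rwa [bGf_zero] at this
      have := hmono Set.self_mem_Ici (Set.mem_Ici.mpr hl) hl
      rwa [bFf_zero] at this
    · have hanti : AntitoneOn (bFf p) (Set.Iic 0) := by
        apply antitoneOn_of_deriv_nonpos (convex_Iic 0)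
          (fun x _ => ((hFd x).differentiableAt).continuousAt.continuousWithinAt)
          (fun x _ => ((hFd x).differentiableAt).differentiableWithinAt)
        intro x hx
        rw [(hFd x).deriv]
        rw [interior_Iic] at hx
        have := hGmono (le_of_lt hx)
        rwa [bGf_zero] at this
      have := hanti (Set.mem_Iic.mpr hl) Set.self_mem_Iic hl
      rwa [bFf_zero] at this
  have hlog : Real.log (bgf p l) ≤ p * l + l ^ 2 / 8 := by
    have h : bFf p l = p * l + l ^ 2 / 8 - Real.log (bgf p l) := rfl
    rw [h] at hFnonneg
    linarith
  calc 1 - p + p * Real.exp l = bgf p l := rfl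
    _ = Real.exp (Real.log (bgf p l)) := (Real.exp_log (bgf_pos p hp0 hp1 l)).symm
    _ ≤ Real.exp (p * l + l ^ 2 / 8) := Real.exp_le_exp.mpr hlog


private lemma sum_prod_bool (n : ℕ) (f : Bool → ℝ) :
    ∑ s : Fin n → Bool, ∏ i, f (s i) = (f false + f true) ^ n := by
  classical
  rw [← Fintype.piFinset_univ, ← Finset.prod_univ_sum]
  simp [Fintype.sum_bool, add_comm (f true) (f false)]

private lemma chernoff (n : ℕ) (p lam a : ℝ) (hp0 : 0 ≤ p) (hp1 : p ≤ 1)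
    (Q : (Fin n → Bool) → Prop) [DecidablePred Q]
    (hQ : ∀ s, Q s → 0 ≤ lam * (((∑ i, if s i then 1 else 0 : ℕ) : ℝ) - a)) :
    ∑ s : Fin n → Bool, (∏ i, (if s i then p else 1 - p)) * (if Q s then (1:ℝ) else 0)
      ≤ Real.exp ((n : ℝ) * (p * lam + lam ^ 2 / 8) - lam * a) := by
  classical
  have hw : ∀ s : Fin n → Bool, 0 ≤ ∏ i, (if s i then p else 1 - p) := by
    intro s
    apply Finset.prod_nonneg
    intro i _
    by_cases h : s i <;> simp [h] <;> linarith
  have step1 : ∑ s : Fin n → Bool, (∏ i, (if s i then p else 1 - p)) * (if Q s then (1:ℝ) else 0)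
      ≤ ∑ s : Fin n → Bool, Real.exp (-(lam * a)) *
          ∏ i, ((if s i then p else 1 - p) * Real.exp (lam * (if s i then 1 else 0))) := by
    apply Finset.sum_le_sum
    intro s _
    have hcnt : ∏ i, ((if s i then p else 1 - p) * Real.exp (lam * (if s i then 1 else 0)))
        = (∏ i, (if s i then p else 1 - p)) * Real.exp (lam * (((∑ i, if s i then 1 else 0 : ℕ)) : ℝ)) := by
      rw [Finset.prod_mul_distrib, ← Real.exp_sum, ← Finset.mul_sum]
      push_cast
      rw [Finset.mul_sum]
    rw [hcnt]
    by_cases hq : Q s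
    · rw [if_pos hq]
      have h1 : (1:ℝ) ≤ Real.exp (lam * (((∑ i, if s i then 1 else 0 : ℕ)) : ℝ) - lam * a) := by
        apply Real.one_le_exp
        have := hQ s hq
        nlinarith
      calc (∏ i, (if s i then p else 1 - p)) * 1
          ≤ (∏ i, (if s i then p else 1 - p)) *
            Real.exp (lam * (((∑ i, if s i then 1 else 0 : ℕ)) : ℝ) - lam * a) :=
            mul_le_mul_of_nonneg_left h1 (hw s)
        _ = Real.exp (-(lam * a)) * ((∏ i, (if s i then p else 1 - p)) *
            Real.exp (lam * (((∑ i, if s i then 1 else 0 : ℕ)) : ℝ))) := by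
            rw [Real.exp_sub]
            rw [Real.exp_neg]
            ring
    · rw [if_neg hq]
      rw [mul_zero]
      exact mul_nonneg (Real.exp_pos _).le (mul_nonneg (hw s) (Real.exp_pos _).le)
  rw [← Finset.mul_sum, sum_prod_bool n
      (fun b => (if b then p else 1 - p) * Real.exp (lam * (if b then 1 else 0)))] at step1
  simp only [if_true, if_false, Bool.false_eq_true, mul_zero, mul_one, Real.exp_zero] at step1
  have hbase : 1 - p + p * Real.exp lam ≤ Real.exp (p * lam + lam ^ 2 / 8) :=
    bernoulli_mgf_le p hp0 hp1 lam
  have hbase0 : 0 ≤ 1 - p + p * Real.exp lam := by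
    have := Real.exp_pos lam
    nlinarith
  calc ∑ s : Fin n → Bool, (∏ i, (if s i then p else 1 - p)) * (if Q s then (1:ℝ) else 0)
      ≤ Real.exp (-(lam * a)) * (1 - p + p * Real.exp lam) ^ n := step1
    _ ≤ Real.exp (-(lam * a)) * (Real.exp (p * lam + lam ^ 2 / 8)) ^ n := by
        apply mul_le_mul_of_nonneg_left _ (Real.exp_pos _).le
        exact pow_le_pow_left₀ hbase0 hbase n
    _ = Real.exp ((n : ℝ) * (p * lam + lam ^ 2 / 8) - lam * a) := by
        rw [← Real.exp_nat_mul, ← Real.exp_add]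
        ring_nf

lemma exp_two_le_nine : Real.exp 2 ≤ 9 := by
  have h := Real.exp_one_lt_d9
  have : Real.exp 2 = Real.exp 1 * Real.exp 1 := by
    rw [← Real.exp_add]; norm_num
  nlinarith [Real.exp_pos 1]

lemma z_bounds (k m : ℕ) (hk : 1 ≤ k) (hm : 1 ≤ m) (hmk : m ≤ k) :
    1/9 ≤ (1 - 2/(2*(k:ℝ) + 1)) ^ (2*m - 2) ∧ (1 - 2/(2*(k:ℝ) + 1)) ^ (2*m - 2) ≤ 1 := by
  have hk1 : (1:ℝ) ≤ (k:ℝ) := by exact_mod_cast hk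
  have hden : (0:ℝ) < 2*(k:ℝ) + 1 := by linarith
  have hden2 : (0:ℝ) < 2*(k:ℝ) - 1 := by linarith
  set r : ℝ := 1 - 2/(2*(k:ℝ) + 1) with hr
  have hr0 : 0 ≤ r := by
    rw [hr, sub_nonneg, div_le_one hden]; linarith
  have hr1 : r ≤ 1 := by
    rw [hr]; have : 0 ≤ 2/(2*(k:ℝ)+1) := by positivity
    linarith
  refine ⟨?_, pow_le_one₀ hr0 hr1⟩
  set t : ℝ := 2/(2*(k:ℝ) - 1) with ht
  have ht0 : 0 < t := by positivity
  have hrexp : Real.exp (-t) ≤ r := by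
    have h1 : 1 + t ≤ Real.exp t := by linarith [Real.add_one_le_exp t]
    have h2 : (1:ℝ)/(Real.exp t) ≤ 1/(1+t) :=
      one_div_le_one_div_of_le (by linarith) h1
    have h3 : (1:ℝ)/(1+t) = r := by
      rw [ht, hr]; field_simp; ring
    rw [Real.exp_neg, ← one_div, ← h3]
    exact h2
  have hmono : r ^ (2*k - 2) ≤ r ^ (2*m - 2) :=
    pow_le_pow_of_le_one hr0 hr1 (by omega)
  have hexp_pow : (Real.exp (-t)) ^ (2*k - 2) = Real.exp (((2*k - 2 : ℕ) : ℝ) * (-t)) := by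
    rw [← Real.exp_nat_mul]
  have hcast : ((2*k - 2 : ℕ) : ℝ) = 2*(k:ℝ) - 2 := by
    push_cast [Nat.cast_sub (by omega : 2 ≤ 2*k)]
    push_cast
    ring
  have hexparg : -2 ≤ ((2*k - 2 : ℕ) : ℝ) * (-t) := by
    rw [hcast, ht]
    have h : (2 * (k:ℝ) - 2) * (2 / (2 * (k:ℝ) - 1)) ≤ 2 := by
      rw [mul_div_assoc', div_le_iff₀ hden2]; linarith
    rw [mul_neg, neg_le_neg_iff]
    exact h
  have h19 : (1:ℝ)/9 ≤ Real.exp (-2) := by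
    rw [Real.exp_neg]
    rw [one_div, inv_le_inv₀ (by norm_num) (Real.exp_pos 2)]
    exact exp_two_le_nine
  calc (1:ℝ)/9 ≤ Real.exp (-2) := h19
    _ ≤ Real.exp (((2*k - 2 : ℕ) : ℝ) * (-t)) := Real.exp_le_exp.mpr hexparg
    _ = (Real.exp (-t)) ^ (2*k - 2) := hexp_pow.symm
    _ ≤ r ^ (2*k - 2) := pow_le_pow_left₀ (Real.exp_pos _).le hrexp _
    _ ≤ r ^ (2*m - 2) := hmono

lemma gap_formula (e y : ℝ)
    (h1 : (1/2 + e) * y + (1/2 - e) * (1 - y) ≠ 0)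
    (h0 : (1/2 - e) * y + (1/2 + e) * (1 - y) ≠ 0) :
    (1/2 + e) * y / ((1/2 + e) * y + (1/2 - e) * (1 - y))
      - (1/2 - e) * y / ((1/2 - e) * y + (1/2 + e) * (1 - y))
      = 2 * e * (y * (1 - y))
        / (((1/2 + e) * y + (1/2 - e) * (1 - y)) * ((1/2 - e) * y + (1/2 + e) * (1 - y))) := by
  rw [div_sub_div _ _ h1 h0, div_eq_div_iff (mul_ne_zero h1 h0) (mul_ne_zero h1 h0)]
  ring

set_option maxHeartbeats 1000000 in
lemma params_core (e y : ℝ) (he0 : 0 < e) (he1 : e ≤ 1/4) (hy1 : 1/2 ≤ y) (hy2 : y ≤ 9/10) :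
    0 ≤ (1/2 - e) * y / ((1/2 - e) * y + (1/2 + e) * (1 - y)) ∧
    (1/2 - e) * y / ((1/2 - e) * y + (1/2 + e) * (1 - y)) ≤ 1 ∧
    0 ≤ (1/2 + e) * y / ((1/2 + e) * y + (1/2 - e) * (1 - y)) ∧
    (1/2 + e) * y / ((1/2 + e) * y + (1/2 - e) * (1 - y)) ≤ 1 ∧
    0 ≤ 1/2 - e + 2 * e * y ∧ 1/2 - e + 2 * e * y ≤ 1 ∧
    2/3 * e ≤ (1/2 + e) * y / ((1/2 + e) * y + (1/2 - e) * (1 - y))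
      - (1/2 - e) * y / ((1/2 - e) * y + (1/2 + e) * (1 - y)) := by
  have hb : (0:ℝ) < 1/2 - e := by linarith
  have hD1 : 1/2 - e ≤ (1/2 + e) * y + (1/2 - e) * (1 - y) := by nlinarith
  have hD0 : 1/2 - e ≤ (1/2 - e) * y + (1/2 + e) * (1 - y) := by nlinarith
  have hD1pos : 0 < (1/2 + e) * y + (1/2 - e) * (1 - y) := by linarith
  have hD0pos : 0 < (1/2 - e) * y + (1/2 + e) * (1 - y) := by linarith
  refine ⟨?_, ?_, ?_, ?_, ?_, ?_, ?_⟩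
  · apply div_nonneg _ hD0pos.le; nlinarith
  · rw [div_le_one hD0pos]; nlinarith
  · apply div_nonneg _ hD1pos.le; nlinarith
  · rw [div_le_one hD1pos]; nlinarith
  · nlinarith
  · nlinarith
  · have hYlb : 1/12 ≤ y * (1 - y) := by nlinarith
    have hDD : ((1/2 + e) * y + (1/2 - e) * (1 - y)) * ((1/2 - e) * y + (1/2 + e) * (1 - y)) ≤ 1/4 := by
      nlinarith [sq_nonneg (e * (1 - 2*y))]
    have hDDpos : 0 < ((1/2 + e) * y + (1/2 - e) * (1 - y)) * ((1/2 - e) * y + (1/2 + e) * (1 - y)) :=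
      mul_pos hD1pos hD0pos
    rw [gap_formula e y hD1pos.ne' hD0pos.ne', le_div_iff₀ hDDpos]
    have hint1 := mul_le_mul_of_nonneg_left hDD (by linarith : (0:ℝ) ≤ 2/3 * e)
    have hint2 := mul_le_mul_of_nonneg_left hYlb (by linarith : (0:ℝ) ≤ 2 * e)
    linarith [hint1, hint2]

lemma params (k m : ℕ) (hk : 1 ≤ k) (hm : 1 ≤ m) (hmk : m ≤ k) :
    0 ≤ p0k k m ∧ p0k k m ≤ 1 ∧ 0 ≤ p1k k m ∧ p1k k m ≤ 1 ∧
    0 ≤ muk k m ∧ muk k m ≤ 1 ∧ 1/(6*(k:ℝ)) ≤ p1k k m - p0k k m := by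
  have hk1 : (1:ℝ) ≤ (k:ℝ) := by exact_mod_cast hk
  have hkpos : (0:ℝ) < (k:ℝ) := by linarith
  obtain ⟨hz1, hz2⟩ := z_bounds k m hk hm hmk
  have hzpos : 0 < (1 - 2/(2*(k:ℝ) + 1)) ^ (2*m - 2) := by linarith
  have hy1 : 1/2 ≤ yk k m := by
    rw [yk, le_div_iff₀ (by linarith)]; linarith
  have hy2 : yk k m ≤ 9/10 := by
    rw [yk, div_le_iff₀ (by linarith)]; linarith
  have he0 : (0:ℝ) < 1/(4*(k:ℝ)) := by positivity
  have he1 : 1/(4*(k:ℝ)) ≤ 1/4 := by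
    rw [div_le_div_iff₀ (by positivity) (by norm_num)]; linarith
  obtain ⟨h1, h2, h3, h4, h5, h6, h7⟩ := params_core (1/(4*(k:ℝ))) (yk k m) he0 he1 hy1 hy2
  have hp1 : p1k k m = (1/2 + 1/(4*(k:ℝ))) * yk k m
      / ((1/2 + 1/(4*(k:ℝ))) * yk k m + (1/2 - 1/(4*(k:ℝ))) * (1 - yk k m)) := rfl
  have hp0 : p0k k m = (1/2 - 1/(4*(k:ℝ))) * yk k m
      / ((1/2 - 1/(4*(k:ℝ))) * yk k m + (1/2 + 1/(4*(k:ℝ))) * (1 - yk k m)) := rfl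
  have hmu : muk k m = 1/2 - 1/(4*(k:ℝ)) + yk k m / (2*(k:ℝ)) := rfl
  have hy2k : yk k m / (2*(k:ℝ)) = 2 * (1/(4*(k:ℝ))) * yk k m := by
    field_simp; ring
  have he6 : 1/(6*(k:ℝ)) ≤ 2/3 * (1/(4*(k:ℝ))) := by
    have : 2/3 * (1/(4*(k:ℝ))) = 1/(6*(k:ℝ)) := by
      field_simp
      ring
    rw [this]
  rw [hp1, hp0, hmu, hy2k]
  exact ⟨h1, h2, h3, h4, h5, h6, le_trans he6 h7⟩

private lemma prod_w_nonneg (n : ℕ) (p : ℝ) (hp0 : 0 ≤ p) (hp1 : p ≤ 1) (s : Fin n → Bool) :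
    0 ≤ ∏ i, (if s i then p else 1 - p) := by
  apply Finset.prod_nonneg
  intro i _
  by_cases h : s i <;> simp [h] <;> linarith


private lemma ind_true (A B : Prop) [Decidable A] [Decidable B] (hAB : ¬A → B) :
    (if (if A then true else false) = true then (0:ℝ) else 1) ≤ (if B then 1 else 0) := by
  by_cases h : A
  · rw [if_pos h, if_pos rfl]
    by_cases h2 : B
    · rw [if_pos h2]; norm_num
    · rw [if_neg h2]
  · rw [if_neg h, if_pos (hAB h), if_neg (by simp)]

private lemma ind_false (A : Prop) [Decidable A] :
    (if (if A then true else false) = false then (0:ℝ) else 1) ≤ (if A then 1 else 0) := by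
  by_cases h : A
  · rw [if_pos h, if_pos h, if_neg (by simp)]
  · rw [if_neg h, if_neg h, if_pos rfl]

private lemma main_core (n : ℕ) (p0 p1 mu t : ℝ)
    (hp00 : 0 ≤ p0) (hp01 : p0 ≤ 1) (hp10 : 0 ≤ p1) (hp11 : p1 ≤ 1)
    (hmu0 : 0 ≤ mu) (hmu1 : mu ≤ 1) (ht : t = (p1 - p0)/2) (ht0 : 0 < t) :
    (∑ b : Bool, ∑ s : Fin n → Bool,
        ((if b then mu else 1 - mu) *
          ∏ i, (if s i then (if b then p1 else p0)
                 else 1 - (if b then p1 else p0))) *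
        (if (if (n:ℝ)*(p0+p1)/2 ≤ ((∑ i, if s i then 1 else 0 : ℕ):ℝ) then true else false)
            = b then (0:ℝ) else 1))
      ≤ Real.exp (-(2*(n:ℝ)*t^2)) := by
  classical
  rw [Fintype.sum_bool]
  simp only [if_true, Bool.false_eq_true, if_false]
  have htrue : ∑ s : Fin n → Bool,
      (mu * ∏ i, (if s i then p1 else 1 - p1)) *
        (if (if (n:ℝ)*(p0+p1)/2 ≤ ((∑ i, if s i then 1 else 0 : ℕ):ℝ) then true else false) = true
          then (0:ℝ) else 1)
      ≤ mu * Real.exp (-(2*(n:ℝ)*t^2)) := by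
    have step1 : ∑ s : Fin n → Bool,
        (mu * ∏ i, (if s i then p1 else 1 - p1)) *
          (if (if (n:ℝ)*(p0+p1)/2 ≤ ((∑ i, if s i then 1 else 0 : ℕ):ℝ) then true else false) = true
            then (0:ℝ) else 1)
        ≤ mu * ∑ s : Fin n → Bool, (∏ i, (if s i then p1 else 1 - p1)) *
          (if ((∑ i, if s i then 1 else 0 : ℕ):ℝ) ≤ (n:ℝ)*(p0+p1)/2 then (1:ℝ) else 0) := by
      rw [Finset.mul_sum]
      apply Finset.sum_le_sum
      intro s _
      rw [mul_assoc]
      apply mul_le_mul_of_nonneg_left _ hmu0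
      apply mul_le_mul_of_nonneg_left _ (prod_w_nonneg n p1 hp10 hp11 s)
      exact ind_true _ _ (fun h => le_of_not_ge h)
    have step2 : ∑ s : Fin n → Bool, (∏ i, (if s i then p1 else 1 - p1)) *
        (if ((∑ i, if s i then 1 else 0 : ℕ):ℝ) ≤ (n:ℝ)*(p0+p1)/2 then (1:ℝ) else 0)
        ≤ Real.exp ((n:ℝ) * (p1 * (-(4*t)) + (-(4*t))^2/8) - (-(4*t)) * ((n:ℝ)*(p0+p1)/2)) := by
      apply chernoff n p1 (-(4*t)) ((n:ℝ)*(p0+p1)/2) hp10 hp11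
      intro s hs
      nlinarith [hs, ht0]
    have hexp : (n:ℝ) * (p1 * (-(4*t)) + (-(4*t))^2/8) - (-(4*t)) * ((n:ℝ)*(p0+p1)/2)
        = -(2*(n:ℝ)*t^2) := by
      rw [ht]; ring
    rw [hexp] at step2
    calc _ ≤ mu * ∑ s : Fin n → Bool, (∏ i, (if s i then p1 else 1 - p1)) *
          (if ((∑ i, if s i then 1 else 0 : ℕ):ℝ) ≤ (n:ℝ)*(p0+p1)/2 then (1:ℝ) else 0) := step1
      _ ≤ mu * Real.exp (-(2*(n:ℝ)*t^2)) := mul_le_mul_of_nonneg_left step2 hmu0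
  have hfalse : ∑ s : Fin n → Bool,
      ((1 - mu) * ∏ i, (if s i then p0 else 1 - p0)) *
        (if (if (n:ℝ)*(p0+p1)/2 ≤ ((∑ i, if s i then 1 else 0 : ℕ):ℝ) then true else false) = false
          then (0:ℝ) else 1)
      ≤ (1 - mu) * Real.exp (-(2*(n:ℝ)*t^2)) := by
    have step1 : ∑ s : Fin n → Bool,
        ((1 - mu) * ∏ i, (if s i then p0 else 1 - p0)) *
          (if (if (n:ℝ)*(p0+p1)/2 ≤ ((∑ i, if s i then 1 else 0 : ℕ):ℝ) then true else false) = false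
            then (0:ℝ) else 1)
        ≤ (1 - mu) * ∑ s : Fin n → Bool, (∏ i, (if s i then p0 else 1 - p0)) *
          (if (n:ℝ)*(p0+p1)/2 ≤ ((∑ i, if s i then 1 else 0 : ℕ):ℝ) then (1:ℝ) else 0) := by
      rw [Finset.mul_sum]
      apply Finset.sum_le_sum
      intro s _
      rw [mul_assoc]
      apply mul_le_mul_of_nonneg_left _ (by linarith : (0:ℝ) ≤ 1 - mu)
      apply mul_le_mul_of_nonneg_left _ (prod_w_nonneg n p0 hp00 hp01 s)
      exact ind_false _
    have step2 : ∑ s : Fin n → Bool, (∏ i, (if s i then p0 else 1 - p0)) *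
        (if (n:ℝ)*(p0+p1)/2 ≤ ((∑ i, if s i then 1 else 0 : ℕ):ℝ) then (1:ℝ) else 0)
        ≤ Real.exp ((n:ℝ) * (p0 * (4*t) + (4*t)^2/8) - (4*t) * ((n:ℝ)*(p0+p1)/2)) := by
      apply chernoff n p0 (4*t) ((n:ℝ)*(p0+p1)/2) hp00 hp01
      intro s hs
      nlinarith [hs, ht0]
    have hexp : (n:ℝ) * (p0 * (4*t) + (4*t)^2/8) - (4*t) * ((n:ℝ)*(p0+p1)/2)
        = -(2*(n:ℝ)*t^2) := by
      rw [ht]; ring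
    rw [hexp] at step2
    calc _ ≤ (1 - mu) * ∑ s : Fin n → Bool, (∏ i, (if s i then p0 else 1 - p0)) *
          (if (n:ℝ)*(p0+p1)/2 ≤ ((∑ i, if s i then 1 else 0 : ℕ):ℝ) then (1:ℝ) else 0) := step1
      _ ≤ (1 - mu) * Real.exp (-(2*(n:ℝ)*t^2)) :=
          mul_le_mul_of_nonneg_left step2 (by linarith)
  calc _ ≤ mu * Real.exp (-(2*(n:ℝ)*t^2)) + (1 - mu) * Real.exp (-(2*(n:ℝ)*t^2)) :=
        add_le_add htrue hfalse
    _ = Real.exp (-(2*(n:ℝ)*t^2)) := by ring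

open Classical in
/-- Lemma 3: under `I(m)` with `ω ~ Bernoulli(μ_m)` and, conditional on `ω`,
`n` i.i.d. Bernoulli(p_ω) forecasts, some function of the number of high forecasts predicts
`ω` with error probability at most `exp(-n/(72k²))`. -/
theorem stmt_18 (k n m : ℕ) (hk : 1 ≤ k) (hn : 1 ≤ n) (hm : 1 ≤ m) (hmk : m ≤ k) :
    ∃ h : ℕ → Bool,
      (∑ b : Bool, ∑ s : Fin n → Bool,
        ((if b then muk k m else 1 - muk k m) *
          ∏ i, (if s i then (if b then p1k k m else p0k k m)
                 else 1 - (if b then p1k k m else p0k k m))) *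
        (if h (∑ i, if s i then 1 else 0) = b then (0:ℝ) else 1))
      ≤ Real.exp (-(n:ℝ)/(72*(k:ℝ)^2)) := by
  classical
  obtain ⟨hp00, hp01, hp10, hp11, hmu0, hmu1, hgap⟩ := params k m hk hm hmk
  have hk1 : (1:ℝ) ≤ (k:ℝ) := by exact_mod_cast hk
  have hkpos : (0:ℝ) < (k:ℝ) := by linarith
  have hn0 : (0:ℝ) ≤ (n:ℝ) := Nat.cast_nonneg n
  have ht0 : 0 < (p1k k m - p0k k m)/2 := by
    have : (0:ℝ) < 1/(6*(k:ℝ)) := by positivity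
    linarith
  refine ⟨fun c => if (n:ℝ)*(p0k k m + p1k k m)/2 ≤ (c:ℝ) then true else false, ?_⟩
  have hcore := main_core n (p0k k m) (p1k k m) (muk k m) ((p1k k m - p0k k m)/2)
    hp00 hp01 hp10 hp11 hmu0 hmu1 rfl ht0
  refine le_trans hcore ?_
  apply Real.exp_le_exp.mpr
  rw [neg_div, neg_le_neg_iff, div_le_iff₀ (by positivity : (0:ℝ) < 72*(k:ℝ)^2)]
  have h1 : 1 ≤ 6*(k:ℝ)*(p1k k m - p0k k m) := by
    rw [div_le_iff₀ (by positivity : (0:ℝ) < 6*(k:ℝ))] at hgap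
    linarith [hgap]
  have h2 : 1 ≤ 144*(k:ℝ)^2*((p1k k m - p0k k m)/2)^2 := by nlinarith [h1]
  have h3 := mul_le_mul_of_nonneg_left h2 hn0
  nlinarith [h3]
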